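/- Let λ > log 3, p(n) = tanh(λ/2)e^{-λ|n|}, and let Σ_λ be the corresponding random variable with law μ_λ. For symmetric radius-1 CA rules f₁, f₂ represented by subsets A₁, A₂ (unions of C-intervals), the distance μ_λ(A₁ Δ A₂) equals (1/8)·(number of radius-1 neighborhood classes on which f₁ and f₂ disagree, weighted by multiplicity), and in particular does not depend on λ. -/

import Mathlib

open MeasureTheory ProbabilityTheory

lemma aux_mem (p0 p1 T R : ℝ) (h2 : T < p1) (h3 : 2*p1 + T < p0)
    (h4 : 0 ≤ T) (hR0 : 0 ≤ R) (hRT : R ≤ T) (b sN b' s' : ℕ)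
    (hb : b ≤ 1) (hs : sN ≤ 2) (hb' : b' ≤ 1) (hs' : s' ≤ 2) :
    ((b:ℝ)*p0 + sN*p1 + R ∈ Set.Icc ((b':ℝ)*p0 + s'*p1) ((b':ℝ)*p0 + s'*p1 + T))
      ↔ (b' = b ∧ s' = sN) := by
  have hp1 : 0 < p1 := by linarith
  constructor
  · rintro ⟨hlo, hhi⟩
    interval_cases b <;> interval_cases b' <;> interval_cases sN <;> interval_cases s' <;>
      first
        | exact ⟨rfl, rfl⟩
        | (exfalso; push_cast at hlo hhi; linarith)
  · rintro ⟨rfl, rfl⟩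
    exact ⟨by linarith, by linarith⟩

lemma aux_sym (f : Fin 2 → Fin 2 → Fin 2 → Fin 2) (hsym : ∀ a b c, f a b c = f c b a)
    (b : Fin 2) (a c a' c' : Fin 2) (h : (a':ℕ) + (c':ℕ) = (a:ℕ) + (c:ℕ)) :
    f a' b c' = f a b c := by
  fin_cases a <;> fin_cases c <;> fin_cases a' <;> fin_cases c' <;>
    first
      | rfl
      | exact hsym _ _ _
      | simp at h

theorem stmt_15 (l : ℝ) (hl : Real.log 3 < l)
    (p : ℤ → ℝ) (hp : ∀ n : ℤ, p n = Real.tanh (l / 2) * Real.exp (-l * |(n : ℝ)|))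
    (Ω : Type) [MeasurableSpace Ω] (P : Measure Ω) [IsProbabilityMeasure P]
    (X : ℤ → Ω → ℝ) (hmeas : ∀ n, Measurable (X n))
    (hindep : iIndepFun X P)
    (hbern : ∀ n, P {ω | X n ω = 1} = 1 / 2 ∧ P {ω | X n ω = 0} = 1 / 2)
    (hval : ∀ n ω, X n ω = 0 ∨ X n ω = 1)
    (S : Ω → ℝ) (hS : ∀ ω, S ω = ∑' n : ℤ, X n ω * p n) (hSm : Measurable S)
    (Cint : ℕ → Set ℝ)
    (hCint : ∀ ν : ℕ, Cint ν =
      Set.Icc ((ν / 3 : ℕ) * p 0 + (ν % 3 : ℕ) * p 1)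
        ((ν / 3 : ℕ) * p 0 + (ν % 3 : ℕ) * p 1 + 2 * ∑' n : ℕ, p ((2 : ℤ) + n)))
    (f₁ f₂ : Fin 2 → Fin 2 → Fin 2 → Fin 2)
    (hsym₁ : ∀ a b c, f₁ a b c = f₁ c b a) (hsym₂ : ∀ a b c, f₂ a b c = f₂ c b a)
    (A₁ A₂ : Set ℝ)
    (hA₁ : A₁ = ⋃ t ∈ {t : Fin 2 × Fin 2 × Fin 2 | f₁ t.1 t.2.1 t.2.2 = 1},
      Cint ((t.2.1 : ℕ) * 3 + (t.1 : ℕ) + (t.2.2 : ℕ)))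
    (hA₂ : A₂ = ⋃ t ∈ {t : Fin 2 × Fin 2 × Fin 2 | f₂ t.1 t.2.1 t.2.2 = 1},
      Cint ((t.2.1 : ℕ) * 3 + (t.1 : ℕ) + (t.2.2 : ℕ))) :
    P.map S (symmDiff A₁ A₂)
      = ((Finset.univ.filter (fun t : Fin 2 × Fin 2 × Fin 2 =>
          f₁ t.1 t.2.1 t.2.2 ≠ f₂ t.1 t.2.1 t.2.2)).card : ENNReal) / 8 := by
  classical
  -- Analytic setup
  set t := Real.tanh (l / 2) with ht
  set E := Real.exp (-l) with hE
  have hl0 : 0 < l := lt_of_le_of_lt (Real.log_nonneg (by norm_num)) hl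
  have htpos : 0 < t := by
    rw [ht, Real.tanh_eq_sinh_div_cosh]
    exact div_pos (Real.sinh_pos_iff.mpr (by linarith)) (Real.cosh_pos _)
  have hE0 : 0 < E := Real.exp_pos _
  have hE3 : E < 1/3 := by
    have h1 : E < Real.exp (-(Real.log 3)) := Real.exp_lt_exp.mpr (by linarith)
    rw [Real.exp_neg, Real.exp_log (by norm_num : (0:ℝ) < 3)] at h1
    linarith
  have h1E : (0:ℝ) < 1 - E := by linarith
  have hpabs : ∀ n : ℤ, p n = t * E ^ n.natAbs := by
    intro n
    rw [hp n]
    congr 1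
    rw [hE, ← Real.exp_nat_mul]
    congr 1
    rw [Nat.cast_natAbs]
    push_cast
    ring
  have hp0 : p 0 = t := by simp [hpabs]
  have hp1 : p 1 = t * E := by simp [hpabs]
  have hpm1 : p (-1) = t * E := by simp [hpabs]
  have hpnonneg : ∀ n, 0 ≤ p n := fun n => by
    rw [hpabs]; exact mul_nonneg htpos.le (pow_nonneg hE0.le _)
  have hgeom : Summable (fun k : ℕ => E ^ k) := summable_geometric_of_lt_one hE0.le (by linarith)
  have hgeomval : ∑' k : ℕ, E ^ k = (1 - E)⁻¹ := tsum_geometric_of_lt_one hE0.le (by linarith)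
  have hsum_nat : Summable (fun k : ℕ => p k) := by
    have : (fun k : ℕ => p k) = fun k : ℕ => t * E ^ k := by
      funext k; rw [hpabs]; simp
    rw [this]; exact hgeom.mul_left t
  have hsum_neg : Summable (fun k : ℕ => p (-(k+1))) := by
    have : (fun k : ℕ => p (-(k+1))) = fun k : ℕ => (t * E) * E ^ k := by
      funext k; rw [hpabs, show ((-((k:ℤ)+1))).natAbs = k + 1 by omega, pow_succ]; ring
    rw [this]; exact hgeom.mul_left _
  have hsumZ : Summable p := Summable.of_nat_of_neg_add_one hsum_nat hsum_neg
  have htsumZ : ∑' n : ℤ, p n = t * (1-E)⁻¹ + (t * E) * (1-E)⁻¹ := by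
    rw [tsum_of_nat_of_neg_add_one hsum_nat hsum_neg]
    congr 1
    · rw [show (fun k : ℕ => p k) = fun k : ℕ => t * E ^ k by funext k; rw [hpabs]; simp,
        tsum_mul_left, hgeomval]
    · rw [show (fun k : ℕ => p (-(k+1))) = fun k : ℕ => (t*E) * E ^ k by
        funext k; rw [hpabs, show ((-((k:ℤ)+1))).natAbs = k + 1 by omega, pow_succ]; ring,
        tsum_mul_left, hgeomval]
  have htail : ∑' k : ℕ, p (2 + k) = (t * E^2) * (1-E)⁻¹ := by
    rw [show (fun k : ℕ => p (2 + k)) = fun k : ℕ => (t*E^2) * E ^ k by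
      funext k; rw [hpabs]
      have : ((2:ℤ) + k).natAbs = k + 2 := by omega
      rw [this]; ring, tsum_mul_left, hgeomval]
  set T : ℝ := 2 * ∑' n : ℕ, p ((2:ℤ) + n) with hTdef
  have hTv : T = 2*t*E^2 / (1-E) := by rw [hTdef, htail]; ring
  have hT0 : 0 ≤ T := by rw [hTv]; exact div_nonneg (by nlinarith) (by linarith)
  have hT_lt : T < p 1 := by
    rw [hTv, div_lt_iff₀ h1E, hp1]
    nlinarith [mul_pos (mul_pos htpos hE0) (show (0:ℝ) < 1 - 3*E by linarith)]
  have hp0_gt : 2 * p 1 + T < p 0 := by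
    have h : 2*t*E^2 / (1-E) < t - 2*(t*E) := by
      rw [div_lt_iff₀ h1E]
      nlinarith [mul_pos htpos (show (0:ℝ) < 1 - 3*E by linarith)]
    rw [hp0, hp1]; linarith [hTv ▸ h]
  -- per-ω decomposition of S
  have hdecomp : ∀ ω, ∃ R : ℝ, 0 ≤ R ∧ R ≤ T ∧
      S ω = X (-1) ω * p (-1) + X 0 ω * p 0 + X 1 ω * p 1 + R := by
    intro ω
    set g : ℤ → ℝ := fun n => X n ω * p n with hg
    have hg_nonneg : ∀ n, 0 ≤ g n := by
      intro n; rcases hval n ω with h | h <;> simp [hg, h, hpnonneg n]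
    have hg_le : ∀ n, g n ≤ p n := by
      intro n; rcases hval n ω with h | h <;> simp [hg, h, hpnonneg n]
    set sfin : Finset ℤ := {-1, 0, 1} with hsfin
    have hgsum : Summable g := Summable.of_nonneg_of_le hg_nonneg hg_le hsumZ
    have hsplit := Summable.sum_add_tsum_compl (s := sfin) hgsum
    have hsplitp := Summable.sum_add_tsum_compl (s := sfin) hsumZ
    have hsum3 : ∀ q : ℤ → ℝ, ∑ n ∈ sfin, q n = q (-1) + q 0 + q 1 := by
      intro q
      rw [hsfin, Finset.sum_insert (by decide), Finset.sum_insert (by decide),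
        Finset.sum_singleton]
      ring
    refine ⟨∑' n : ↑((sfin : Set ℤ))ᶜ, g n, tsum_nonneg (fun n => hg_nonneg _), ?_, ?_⟩
    · have h1 : ∑' n : ↑((sfin : Set ℤ))ᶜ, g n ≤ ∑' n : ↑((sfin : Set ℤ))ᶜ, p n :=
        Summable.tsum_le_tsum (fun n => hg_le _) (hgsum.subtype _) (hsumZ.subtype _)
      have h2 : ∑' n : ↑((sfin : Set ℤ))ᶜ, p n = T := by
        have h3 := hsplitp
        rw [hsum3 p, htsumZ, hpm1, hp0, hp1] at h3
        rw [hTv]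
        field_simp at h3 ⊢
        linarith
      linarith
    · rw [hS ω, ← hsplit, hsum3 g]
  -- events
  set Ev : Fin 2 × Fin 2 × Fin 2 → Set Ω := fun v =>
    {ω | X (-1) ω = ((v.1 : ℕ) : ℝ) ∧ X 0 ω = ((v.2.1 : ℕ) : ℝ) ∧ X 1 ω = ((v.2.2 : ℕ) : ℝ)}
    with hEv
  have hEvMeas : ∀ v, MeasurableSet (Ev v) := by
    intro v
    have : Ev v = X (-1) ⁻¹' {((v.1 : ℕ) : ℝ)} ∩
        (X 0 ⁻¹' {((v.2.1 : ℕ) : ℝ)} ∩ X 1 ⁻¹' {((v.2.2 : ℕ) : ℝ)}) := rfl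
    rw [this]
    exact ((hmeas _) (measurableSet_singleton _)).inter
      (((hmeas _) (measurableSet_singleton _)).inter ((hmeas _) (measurableSet_singleton _)))
  have hEvP : ∀ v, P (Ev v) = 1 / 8 := by
    intro v
    have hhalf : ∀ (i : ℤ) (c : Fin 2), P (X i ⁻¹' {((c : ℕ) : ℝ)}) = 1 / 2 := by
      intro i c
      fin_cases c
      · simpa [Set.preimage, Set.mem_singleton_iff] using (hbern i).2
      · simpa [Set.preimage, Set.mem_singleton_iff] using (hbern i).1
    set w : ℤ → ℝ := fun i => if i = -1 then ((v.1 : ℕ) : ℝ) else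
      if i = 0 then ((v.2.1 : ℕ) : ℝ) else ((v.2.2 : ℕ) : ℝ) with hw
    have hset : Ev v = ⋂ i ∈ ({-1, 0, 1} : Finset ℤ), X i ⁻¹' {w i} := by
      ext ω
      simp only [hEv, Set.mem_setOf_eq, Set.mem_iInter, Finset.mem_insert, Finset.mem_singleton,
        Set.mem_preimage, Set.mem_singleton_iff, hw]
      constructor
      · rintro ⟨h1, h2, h3⟩ i hi
        rcases hi with rfl | rfl | rfl <;> norm_num [h1, h2, h3]
      · intro h
        refine ⟨?_, ?_, ?_⟩
        · simpa using h (-1) (by norm_num)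
        · simpa using h 0 (by norm_num)
        · simpa using h 1 (by norm_num)
    rw [hset, hindep.meas_biInter (S := ({-1, 0, 1} : Finset ℤ))
      (fun i _ => ⟨{w i}, measurableSet_singleton _, rfl⟩)]
    rw [Finset.prod_insert (by decide), Finset.prod_insert (by decide), Finset.prod_singleton]
    have e1 : P (X (-1) ⁻¹' {w (-1)}) = 1/2 := by simpa [hw] using hhalf (-1) v.1
    have e2 : P (X 0 ⁻¹' {w 0}) = 1/2 := by simpa [hw] using hhalf 0 v.2.1
    have e3 : P (X 1 ⁻¹' {w 1}) = 1/2 := by simpa [hw] using hhalf 1 v.2.2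
    rw [e1, e2, e3]
    norm_num
    rw [← ENNReal.mul_inv (by norm_num) (by norm_num), ← ENNReal.mul_inv] <;> norm_num
  -- Cint membership characterization
  have hCmem : ∀ (v : Fin 2 × Fin 2 × Fin 2) ω, ω ∈ Ev v →
      ∀ (u : Fin 2 × Fin 2 × Fin 2),
      (S ω ∈ Cint ((u.2.1 : ℕ) * 3 + (u.1 : ℕ) + (u.2.2 : ℕ)) ↔
        ((u.2.1 : ℕ) = (v.2.1 : ℕ) ∧ (u.1 : ℕ) + (u.2.2 : ℕ) = (v.1 : ℕ) + (v.2.2 : ℕ))) := by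
    rintro v ω ⟨hω1, hω2, hω3⟩ u
    obtain ⟨R, hR0, hRT, hSd⟩ := hdecomp ω
    have hb : (v.2.1 : ℕ) ≤ 1 := Fin.is_le _
    have hb' : (u.2.1 : ℕ) ≤ 1 := Fin.is_le _
    have hs : (v.1 : ℕ) + (v.2.2 : ℕ) ≤ 2 := by
      have := Fin.is_le v.1; have := Fin.is_le v.2.2; omega
    have hs' : (u.1 : ℕ) + (u.2.2 : ℕ) ≤ 2 := by
      have := Fin.is_le u.1; have := Fin.is_le u.2.2; omega
    have hdiv : ((u.2.1 : ℕ) * 3 + (u.1 : ℕ) + (u.2.2 : ℕ)) / 3 = (u.2.1 : ℕ) := by omega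
    have hmod : ((u.2.1 : ℕ) * 3 + (u.1 : ℕ) + (u.2.2 : ℕ)) % 3 = (u.1 : ℕ) + (u.2.2 : ℕ) := by
      omega
    have hSval : S ω = ((v.2.1 : ℕ) : ℝ) * p 0 + (((v.1 : ℕ) + (v.2.2 : ℕ) : ℕ) : ℝ) * p 1 + R := by
      rw [hSd, hω1, hω2, hω3, hpm1, hp1, hp0]
      push_cast
      ring
    rw [hCint, hdiv, hmod, hSval]
    exact aux_mem (p 0) (p 1) T R hT_lt hp0_gt hT0 hR0 hRT _ _ _ _ hb hs hb' hs'
  -- membership in A₁ / A₂ characterization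
  have hchar : ∀ (f : Fin 2 → Fin 2 → Fin 2 → Fin 2), (∀ a b c, f a b c = f c b a) →
      ∀ (A : Set ℝ), A = (⋃ u ∈ {u : Fin 2 × Fin 2 × Fin 2 | f u.1 u.2.1 u.2.2 = 1},
        Cint ((u.2.1 : ℕ) * 3 + (u.1 : ℕ) + (u.2.2 : ℕ))) →
      ∀ v ω, ω ∈ Ev v → (S ω ∈ A ↔ f v.1 v.2.1 v.2.2 = 1) := by
    intro f hsym A hA v ω hωv
    rw [hA]
    simp only [Set.mem_iUnion, Set.mem_setOf_eq, exists_prop]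
    constructor
    · rintro ⟨u, hfu, hmem⟩
      obtain ⟨hbEq, hsEq⟩ := (hCmem v ω hωv u).mp hmem
      have hbFin : u.2.1 = v.2.1 := Fin.val_injective hbEq
      have := aux_sym f hsym v.2.1 v.1 v.2.2 u.1 u.2.2 hsEq
      rw [← this, ← hbFin]
      exact hfu
    · intro hfv
      exact ⟨v, hfv, (hCmem v ω hωv v).mpr ⟨rfl, rfl⟩⟩
  -- measurability of A₁, A₂
  have hAm : ∀ (A : Set ℝ) (f : Fin 2 → Fin 2 → Fin 2 → Fin 2),
      A = (⋃ u ∈ {u : Fin 2 × Fin 2 × Fin 2 | f u.1 u.2.1 u.2.2 = 1},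
        Cint ((u.2.1 : ℕ) * 3 + (u.1 : ℕ) + (u.2.2 : ℕ))) → MeasurableSet A := by
    intro A f hA
    rw [hA]
    exact MeasurableSet.biUnion (Set.to_countable _)
      (fun u _ => (hCint _) ▸ measurableSet_Icc
        (a := (((((u.2.1:ℕ)*3 + u.1 + u.2.2) / 3 : ℕ) : ℝ) * p 0 +
          ((((u.2.1:ℕ)*3 + u.1 + u.2.2) % 3 : ℕ) : ℝ) * p 1)))
  have hA₁m : MeasurableSet A₁ := hAm A₁ f₁ hA₁
  have hA₂m : MeasurableSet A₂ := hAm A₂ f₂ hA₂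
  have hDm : MeasurableSet (symmDiff A₁ A₂) := hA₁m.symmDiff hA₂m
  -- the filter set
  set F : Finset (Fin 2 × Fin 2 × Fin 2) := Finset.univ.filter
    (fun v => f₁ v.1 v.2.1 v.2.2 ≠ f₂ v.1 v.2.1 v.2.2) with hF
  -- main set identity
  have hfin2 : ∀ x y : Fin 2, ((x = 1 ∧ ¬ y = 1) ∨ (y = 1 ∧ ¬ x = 1)) ↔ x ≠ y := by decide
  have hPrei : S ⁻¹' (symmDiff A₁ A₂) = ⋃ v ∈ F, Ev v := by
    ext ω
    have hcov : ∃ v : Fin 2 × Fin 2 × Fin 2, ω ∈ Ev v := by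
      have hpick : ∀ i : ℤ, ∃ c : Fin 2, X i ω = ((c : ℕ) : ℝ) := by
        intro i
        rcases hval i ω with h | h
        · exact ⟨0, by simpa using h⟩
        · exact ⟨1, by simpa using h⟩
      obtain ⟨a, ha⟩ := hpick (-1)
      obtain ⟨b, hb⟩ := hpick 0
      obtain ⟨c, hc⟩ := hpick 1
      exact ⟨(a, b, c), ha, hb, hc⟩
    obtain ⟨v, hv⟩ := hcov
    have h1 := hchar f₁ hsym₁ A₁ hA₁ v ω hv
    have h2 := hchar f₂ hsym₂ A₂ hA₂ v ω hv
    simp only [Set.mem_preimage, Set.mem_iUnion, exists_prop]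
    rw [Set.mem_symmDiff]
    constructor
    · intro hD
      refine ⟨v, ?_, hv⟩
      rw [hF, Finset.mem_filter]
      refine ⟨Finset.mem_univ _, ?_⟩
      rw [← hfin2]
      rcases hD with ⟨hx, hy⟩ | ⟨hx, hy⟩
      · exact Or.inl ⟨h1.mp hx, fun hc => hy (h2.mpr hc)⟩
      · exact Or.inr ⟨h2.mp hx, fun hc => hy (h1.mpr hc)⟩
    · rintro ⟨u, huF, hu⟩
      -- u and v both contain ω, so u = v
      have huv : u = v := by
        obtain ⟨e1, e2, e3⟩ := hu
        obtain ⟨g1, g2, g3⟩ := hv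
        have c1 : u.1 = v.1 := Fin.val_injective (by exact_mod_cast e1.symm.trans g1)
        have c2 : u.2.1 = v.2.1 := Fin.val_injective (by exact_mod_cast e2.symm.trans g2)
        have c3 : u.2.2 = v.2.2 := Fin.val_injective (by exact_mod_cast e3.symm.trans g3)
        exact Prod.ext c1 (Prod.ext c2 c3)
      subst huv
      rw [hF, Finset.mem_filter] at huF
      have hne := huF.2
      rw [← hfin2] at hne
      rcases hne with ⟨hx, hy⟩ | ⟨hx, hy⟩
      · exact Or.inl ⟨h1.mpr hx, fun hc => hy (h2.mp hc)⟩
      · exact Or.inr ⟨h2.mpr hx, fun hc => hy (h1.mp hc)⟩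
  -- pairwise disjointness of events
  have hdisj : (↑F : Set (Fin 2 × Fin 2 × Fin 2)).PairwiseDisjoint Ev := by
    intro a _ b _ hab
    simp only [Function.onFun]
    rw [Set.disjoint_left]
    rintro ω ⟨e1, e2, e3⟩ ⟨g1, g2, g3⟩
    exact hab (Prod.ext (Fin.val_injective (by exact_mod_cast e1.symm.trans g1))
      (Prod.ext (Fin.val_injective (by exact_mod_cast e2.symm.trans g2))
        (Fin.val_injective (by exact_mod_cast e3.symm.trans g3))))
  -- conclude
  rw [Measure.map_apply hSm hDm, hPrei,
    measure_biUnion_finset hdisj (fun v _ => hEvMeas v)]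
  rw [Finset.sum_congr rfl (fun v _ => hEvP v), Finset.sum_const, nsmul_eq_mul]
  rw [one_div, div_eq_mul_inv]
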